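/- arXiv:2311.06065 — 2 statements merged into one kernel-verified Lean document; each statement's English description precedes it below -/
import Mathlib

section
/- Let C be a field of characteristic zero and let p ∈ C[t,x] be a polynomial. For integers m, n with n ≠ 0, the polynomial p satisfies p(t+n, x+m) = p(t,x) if and only if p = h(mt - nx) for some univariate polynomial h ∈ C[z]. -/
open MvPolynomial

/-- The shift automorphism of `K[t,x]` sending `t ↦ t + a`, `x ↦ x + b`
(variable `0` is `t`, variable `1` is `x`). -/
noncomputable def shift2 (K : Type*) [Field K] [CharZero K] (a b : ℤ) :
    MvPolynomial (Fin 2) K →ₐ[K] MvPolynomial (Fin 2) K :=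
  aeval (fun i => X i + MvPolynomial.C (if i = 0 then (a : K) else (b : K)))

lemma const_of_comp_shift {R : Type*} [CommRing R] [IsDomain R] [CharZero R]
    (c : R) (hc : c ≠ 0) (f : Polynomial R)
    (h : f.comp (Polynomial.X + Polynomial.C c) = f) :
    ∃ r : R, f = Polynomial.C r := by
  have key : ∀ k : ℕ, f.eval ((k : R) * c) = f.eval 0 := by
    intro k
    induction k with
    | zero => simp
    | succ k ih =>
      have : f.eval ((k : R) * c + c) = f.eval ((k : R) * c) := by
        conv_rhs => rw [← h]
        simp [Polynomial.eval_comp]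
      push_cast
      rw [add_mul, one_mul, this, ih]
  have hg : f - Polynomial.C (f.eval 0) = 0 := by
    apply Polynomial.eq_zero_of_infinite_isRoot
    apply Set.Infinite.mono (s := Set.range fun k : ℕ => (k : R) * c)
    · rintro x ⟨k, rfl⟩
      simp [Polynomial.IsRoot, key k]
    · exact Set.infinite_range_of_injective fun a b hab => by
        exact_mod_cast mul_right_cancel₀ hc hab
  exact ⟨f.eval 0, sub_eq_zero.mp hg⟩

/-- Iso `K[t,x] ≃ (K[t])[x]`: outer variable `X 1`, inner variable `X 0`. -/
noncomputable def E2 (K : Type*) [Field K] [CharZero K] :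
    MvPolynomial (Fin 2) K ≃ₐ[K] Polynomial (Polynomial K) :=
  (renameEquiv K (Equiv.swap 0 1)).trans
    ((finSuccEquiv K 1).trans
      (Polynomial.mapAlgEquiv ((finSuccEquiv K 0).trans
        (Polynomial.mapAlgEquiv (isEmptyAlgEquiv K (Fin 0))))))

lemma E2_X0 (K : Type*) [Field K] [CharZero K] :
    E2 K (X 0) = Polynomial.C Polynomial.X := by
  have h0 : (renameEquiv K (Equiv.swap (0 : Fin 2) 1)) (X 0)
      = X (Fin.succ (0 : Fin 1)) := by
    rw [renameEquiv_apply, rename_X, Equiv.swap_apply_left, ← Fin.succ_zero_eq_one]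
  unfold E2
  rw [AlgEquiv.trans_apply, AlgEquiv.trans_apply, h0, finSuccEquiv_X_succ]
  simp [finSuccEquiv_X_zero]

lemma E2_X1 (K : Type*) [Field K] [CharZero K] :
    E2 K (X 1) = Polynomial.X := by
  simp [E2, finSuccEquiv_X_zero]

noncomputable def Fm (K : Type*) [Field K] [CharZero K] (m n : ℤ) :
    MvPolynomial (Fin 2) K →ₐ[K] MvPolynomial (Fin 2) K :=
  aeval ![(m : K) • X 0 - (n : K) • X 1, X 0]

noncomputable def Gm (K : Type*) [Field K] [CharZero K] (m n : ℤ) :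
    MvPolynomial (Fin 2) K →ₐ[K] MvPolynomial (Fin 2) K :=
  aeval ![X 1, ((m : K) / (n : K)) • X 1 - ((n : K))⁻¹ • X 0]

noncomputable def Sm (K : Type*) [Field K] [CharZero K] (n : ℤ) :
    MvPolynomial (Fin 2) K →ₐ[K] MvPolynomial (Fin 2) K :=
  aeval ![X 0, X 1 + MvPolynomial.C (n : K)]

lemma shift_lin (K : Type*) [Field K] [CharZero K] (m n : ℤ) :
    shift2 K n m ((m : K) • (X 0 : MvPolynomial (Fin 2) K) - (n : K) • X 1)
      = (m : K) • X 0 - (n : K) • X 1 := by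
  simp only [map_sub, map_smul, shift2, aeval_X]
  simp only [show ((0 : Fin 2) = 0) = True by simp, show ((1 : Fin 2) = 0) = False by simp,
    if_true, if_false]
  simp only [smul_eq_C_mul, map_intCast]
  ring

lemma FGid (K : Type*) [Field K] [CharZero K] (m n : ℤ) (hn' : (n : K) ≠ 0) :
    (Fm K m n).comp (Gm K m n) = AlgHom.id K _ := by
  apply algHom_ext
  rw [Fin.forall_fin_two]
  constructor
  · simp [Fm, Gm]
  · simp only [AlgHom.comp_apply, AlgHom.id_apply, Fm, Gm, aeval_X, Matrix.cons_val_zero,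
      Matrix.cons_val_one, Matrix.head_cons, map_sub, map_smul]
    rw [smul_sub, smul_smul, smul_smul, div_eq_inv_mul, inv_mul_cancel₀ hn', one_smul,
      sub_sub_cancel]

lemma GFid (K : Type*) [Field K] [CharZero K] (m n : ℤ) (hn' : (n : K) ≠ 0) :
    (Gm K m n).comp (Fm K m n) = AlgHom.id K _ := by
  apply algHom_ext
  rw [Fin.forall_fin_two]
  constructor
  · simp only [AlgHom.comp_apply, AlgHom.id_apply, Fm, Gm, aeval_X, Matrix.cons_val_zero,
      Matrix.cons_val_one, Matrix.head_cons, map_sub, map_smul]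
    rw [smul_sub, smul_smul, smul_smul, div_eq_inv_mul, ← mul_assoc,
      mul_inv_cancel₀ hn', one_mul, one_smul, sub_sub_cancel]
  · simp [Fm, Gm]

lemma Fcomm (K : Type*) [Field K] [CharZero K] (m n : ℤ) :
    (shift2 K n m).comp (Fm K m n) = (Fm K m n).comp (Sm K n) := by
  apply algHom_ext
  rw [Fin.forall_fin_two]
  constructor
  · simp only [AlgHom.comp_apply, Fm, Sm, aeval_X, Matrix.cons_val_zero]
    exact shift_lin K m n
  · simp only [AlgHom.comp_apply, Fm, Sm, aeval_X, Matrix.cons_val_one, Matrix.head_cons,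
      map_add, aeval_C]
    simp [shift2, algebraMap_eq]

lemma Sconj (K : Type*) [Field K] [CharZero K] (n : ℤ) :
    (E2 K).toAlgHom.comp (Sm K n) =
      ((Polynomial.aeval (Polynomial.X + Polynomial.C (Polynomial.C (n : K)))).restrictScalars
        K).comp (E2 K).toAlgHom := by
  apply algHom_ext
  rw [Fin.forall_fin_two]
  constructor
  · simp only [AlgHom.comp_apply, AlgEquiv.toAlgHom_eq_coe, AlgHom.coe_coe,
      AlgHom.coe_restrictScalars', Sm, aeval_X, Matrix.cons_val_zero]
    rw [AlgEquiv.coe_algHom, E2_X0]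
    simp [Polynomial.aeval_C, Polynomial.algebraMap_eq]
  · simp only [AlgHom.comp_apply, AlgEquiv.toAlgHom_eq_coe, AlgHom.coe_coe,
      AlgHom.coe_restrictScalars', Sm, aeval_X, Matrix.cons_val_one, Matrix.head_cons,
      map_add]
    rw [Matrix.cons_val_fin_one, map_add, AlgEquiv.coe_algHom, E2_X1]
    simp [algebraMap_eq, Polynomial.algebraMap_eq]


lemma E2_aeval_X0 (K : Type*) [Field K] [CharZero K] (r : Polynomial K) :
    E2 K (Polynomial.aeval (X 0 : MvPolynomial (Fin 2) K) r) = Polynomial.C r := by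
  rw [← Polynomial.aeval_algHom_apply (E2 K) (X 0) r, E2_X0]
  rw [show (Polynomial.C Polynomial.X : Polynomial (Polynomial K)) =
      Polynomial.CAlgHom (R := K) Polynomial.X from rfl,
    Polynomial.aeval_algHom_apply, Polynomial.aeval_X_left_apply]
  rfl

lemma Fm_aeval (K : Type*) [Field K] [CharZero K] (m n : ℤ) (r : Polynomial K) :
    Fm K m n (Polynomial.aeval (X 0 : MvPolynomial (Fin 2) K) r)
      = Polynomial.aeval ((m : K) • (X 0 : MvPolynomial (Fin 2) K) - (n : K) • X 1) r := by
  rw [← Polynomial.aeval_algHom_apply (Fm K m n) (X 0) r]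
  congr 1
  simp [Fm]

lemma Sm_fixed_const (K : Type*) [Field K] [CharZero K] (n : ℤ) (hn' : (n : K) ≠ 0)
    (q : MvPolynomial (Fin 2) K) (hSq : Sm K n q = q) :
    ∃ r : Polynomial K, q = Polynomial.aeval (X 0 : MvPolynomial (Fin 2) K) r := by
  have hcomp : (E2 K q).comp (Polynomial.X + Polynomial.C (Polynomial.C (n : K)))
      = E2 K q := by
    have h3 := AlgHom.congr_fun (Sconj K n) q
    simp only [AlgHom.comp_apply, AlgEquiv.toAlgHom_eq_coe, AlgHom.coe_coe,
      AlgHom.coe_restrictScalars'] at h3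
    rw [hSq] at h3
    rw [Polynomial.comp_eq_aeval]
    exact h3.symm
  obtain ⟨r, hr⟩ := const_of_comp_shift (Polynomial.C (n : K))
    (by simpa using hn') (E2 K q) hcomp
  refine ⟨r, (E2 K).injective ?_⟩
  rw [hr, E2_aeval_X0]

lemma shift_fixed_forward (K : Type*) [Field K] [CharZero K]
    (p : MvPolynomial (Fin 2) K) (m n : ℤ) (hn' : (n : K) ≠ 0)
    (hfix : shift2 K n m p = p) :
    ∃ h : Polynomial K,
      p = Polynomial.aeval ((m : K) • (X 0 : MvPolynomial (Fin 2) K) - (n : K) • X 1) h := by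
  have hpq : Fm K m n (Gm K m n p) = p := by
    rw [← AlgHom.comp_apply, FGid K m n hn', AlgHom.id_apply]
  have hSq : Sm K n (Gm K m n p) = Gm K m n p := by
    have h1 : Fm K m n (Sm K n (Gm K m n p)) = Fm K m n (Gm K m n p) := by
      have h2 := AlgHom.congr_fun (Fcomm K m n) (Gm K m n p)
      simp only [AlgHom.comp_apply] at h2
      rw [← h2, hpq, hfix]
    have hFinj : Function.Injective (Fm K m n) := by
      intro a b hab
      have h3 := congrArg (Gm K m n) hab
      rwa [← AlgHom.comp_apply, ← AlgHom.comp_apply, GFid K m n hn', AlgHom.id_apply,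
        AlgHom.id_apply] at h3
    exact hFinj h1
  obtain ⟨r, hr⟩ := Sm_fixed_const K n hn' (Gm K m n p) hSq
  exact ⟨r, by rw [← hpq, hr, Fm_aeval]⟩

/-- For a field `K` of characteristic zero, `p ∈ K[t,x]` and integers `m, n` with `n ≠ 0`:
`p(t+n, x+m) = p(t,x)` iff `p = h(mt - nx)` for some univariate polynomial `h`. -/
theorem shift_fixed_iff_integer_linear (K : Type*) [Field K] [CharZero K]
    (p : MvPolynomial (Fin 2) K) (m n : ℤ) (hn : n ≠ 0) :
    shift2 K n m p = p ↔
      ∃ h : Polynomial K,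
        p = Polynomial.aeval ((m : K) • (X 0 : MvPolynomial (Fin 2) K) - (n : K) • X 1) h := by
  have hn' : (n : K) ≠ 0 := by exact_mod_cast hn
  constructor
  · exact shift_fixed_forward K p m n hn'
  · rintro ⟨h, rfl⟩
    rw [← Polynomial.aeval_algHom_apply (shift2 K n m) _ h, shift_lin]
end

section
/- Let C be a field of characteristic zero and p ∈ C[t,x] a nonzero polynomial. Suppose that for every irreducible factor q of p there exist integers m ∈ ℤ and n > 0 such that σ_t^n σ_x^m(q) divides p. Then p is integer-linear, i.e., every irreducible factor of p has the form h(at + bx) for some univariate polynomial h ∈ C[z] and integers a, b. -/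
open MvPolynomial

/-- A polynomial in `K[t,x]` is integer-linear if every irreducible factor has the
form `h(mt + nx)` with `h ∈ K[z]` and `m, n ∈ ℤ`. -/
def IsIntegerLinear {K : Type*} [Field K] [CharZero K] (p : MvPolynomial (Fin 2) K) : Prop :=
  ∀ q : MvPolynomial (Fin 2) K, Irreducible q → q ∣ p →
    ∃ (h : Polynomial K) (m n : ℤ),
      q = Polynomial.aeval ((m : K) • (X 0 : MvPolynomial (Fin 2) K) + (n : K) • X 1) h

section Aux

variable {K : Type*} [Field K] [CharZero K]

lemma shift2_comp (a b a' b' : ℤ) (f : MvPolynomial (Fin 2) K) :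
    shift2 K a b (shift2 K a' b' f) = shift2 K (a + a') (b + b') f := by
  have h : (shift2 K a b).comp (shift2 K a' b') = shift2 K (a + a') (b + b') := by
    apply MvPolynomial.algHom_ext
    intro i
    fin_cases i <;> simp [shift2, map_add, aeval_X, aeval_C] <;> ring
  exact DFunLike.congr_fun h f

lemma shift2_zero (f : MvPolynomial (Fin 2) K) : shift2 K 0 0 f = f := by
  have h : shift2 K 0 0 = AlgHom.id K (MvPolynomial (Fin 2) K) := by
    apply MvPolynomial.algHom_ext
    intro i
    fin_cases i <;> simp [shift2]
  rw [h]; rfl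

noncomputable def shiftEquiv (a b : ℤ) :
    MvPolynomial (Fin 2) K ≃ₐ[K] MvPolynomial (Fin 2) K :=
  AlgEquiv.ofAlgHom (shift2 K a b) (shift2 K (-a) (-b))
    (AlgHom.ext fun f => by
      simp only [AlgHom.comp_apply, AlgHom.id_apply]
      rw [shift2_comp, add_neg_cancel, add_neg_cancel, shift2_zero])
    (AlgHom.ext fun f => by
      simp only [AlgHom.comp_apply, AlgHom.id_apply]
      rw [shift2_comp, neg_add_cancel, neg_add_cancel, shift2_zero])

lemma shiftEquiv_apply (a b : ℤ) (f : MvPolynomial (Fin 2) K) :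
    shiftEquiv a b f = shift2 K a b f := rfl

lemma shift2_irreducible {q : MvPolynomial (Fin 2) K} (hq : Irreducible q) (a b : ℤ) :
    Irreducible (shift2 K a b q) := by
  rw [← shiftEquiv_apply]
  exact hq.map (shiftEquiv a b)

lemma assoc_map (a b : ℤ) {x y : MvPolynomial (Fin 2) K} (h : Associated x y) :
    Associated (shift2 K a b x) (shift2 K a b y) := by
  obtain ⟨u, hu⟩ := h
  refine ⟨Units.map (shiftEquiv (K := K) a b).toAlgHom.toMonoidHom u, ?_⟩
  rw [← hu, map_mul]
  congr 1

lemma exists_assoc_shift (p q : MvPolynomial (Fin 2) K) (hp : p ≠ 0) (hq : Irreducible q)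
    (hqp : q ∣ p)
    (H : ∀ r : MvPolynomial (Fin 2) K, Irreducible r → r ∣ p →
      ∃ m n : ℤ, 0 < n ∧ shift2 K n m r ∣ p) :
    ∃ N M : ℤ, 0 < N ∧ Associated (shift2 K N M q) q := by
  classical
  choose m n hn hd using H
  set nxt : ℤ × ℤ → ℤ × ℤ := fun z =>
    if h : shift2 K z.1 z.2 q ∣ p then
      (n _ (shift2_irreducible hq z.1 z.2) h + z.1, m _ (shift2_irreducible hq z.1 z.2) h + z.2)
    else z with hnxt
  set seq : ℕ → ℤ × ℤ := fun k => nxt^[k] (0, 0) with hseq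
  have hdvd : ∀ k, shift2 K (seq k).1 (seq k).2 q ∣ p := by
    intro k
    induction k with
    | zero => simpa [hseq, shift2_zero] using hqp
    | succ k ih =>
      have hstep : seq (k + 1) = nxt (seq k) := Function.iterate_succ_apply' _ _ _
      rw [hstep, hnxt]
      simp only [dif_pos ih]
      rw [← shift2_comp]
      exact hd _ (shift2_irreducible hq _ _) ih
  have hlt : ∀ k, (seq k).1 < (seq (k + 1)).1 := by
    intro k
    have hstep : seq (k + 1) = nxt (seq k) := Function.iterate_succ_apply' _ _ _
    rw [hstep, hnxt]
    simp only [dif_pos (hdvd k)]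
    have := hn _ (shift2_irreducible hq (seq k).1 (seq k).2) (hdvd k)
    exact lt_add_of_pos_left _ this
  have hmono : StrictMono fun k => (seq k).1 := strictMono_nat_of_lt_succ hlt
  -- pigeonhole
  have hfac : ∀ k, ∃ r ∈ UniqueFactorizationMonoid.factors p,
      Associated (shift2 K (seq k).1 (seq k).2 q) r := fun k =>
    UniqueFactorizationMonoid.exists_mem_factors_of_dvd hp (shift2_irreducible hq _ _) (hdvd k)
  choose r hr ha using hfac
  obtain ⟨i, j, hij, hfe⟩ := Finite.exists_ne_map_eq_of_infinite
    (fun k => (⟨r k, Multiset.mem_toFinset.2 (hr k)⟩ :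
      {x // x ∈ (UniqueFactorizationMonoid.factors p).toFinset}))
  have key : ∀ i j : ℕ, i < j → r i = r j →
      ∃ N M : ℤ, 0 < N ∧ Associated (shift2 K N M q) q := by
    intro i j hlt' hre
    have hassoc : Associated (shift2 K (seq j).1 (seq j).2 q)
        (shift2 K (seq i).1 (seq i).2 q) := (ha j).trans (hre ▸ (ha i)).symm
    have h2 := assoc_map (-(seq i).1) (-(seq i).2) hassoc
    rw [shift2_comp, shift2_comp, neg_add_cancel, neg_add_cancel, shift2_zero] at h2
    exact ⟨_, _, by linarith [hmono hlt'], h2⟩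
  have hre : r i = r j := congrArg Subtype.val hfe
  rcases hij.lt_or_gt with h | h
  · exact key i j h hre
  · exact key j i h hre.symm

end Aux

section Main

variable {K : Type*} [Field K] [CharZero K]

lemma eq_aeval_of_assoc (q : MvPolynomial (Fin 2) K) (hq0 : q ≠ 0) (N M : ℤ) (hN : 0 < N)
    (hassoc : Associated (shift2 K N M q) q) :
    ∃ (h : Polynomial K) (m' n' : ℤ),
      q = Polynomial.aeval ((m' : K) • (X 0 : MvPolynomial (Fin 2) K) + (n' : K) • X 1) h := by
  classical
  have hNK : (N : K) ≠ 0 := Int.cast_ne_zero.2 hN.ne'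
  set e : MvPolynomial (Fin 2) K ≃ₐ[K] Polynomial (MvPolynomial (Fin 1) K) :=
    finSuccEquiv K 1 with he
  set L : MvPolynomial (Fin 2) K := C (M : K) * X 0 - C (N : K) * X 1 with hL
  set ψ : MvPolynomial (Fin 2) K →ₐ[K] MvPolynomial (Fin 2) K :=
    aeval (fun i => if i = 0 then X 0 else C ((M : K) / N) * X 0 - C ((N : K))⁻¹ * X 1) with hψ
  set φ : MvPolynomial (Fin 2) K →ₐ[K] MvPolynomial (Fin 2) K :=
    aeval (fun i => if i = 0 then X 0 else L) with hφ
  have hCC : (C ((N : K))⁻¹ : MvPolynomial (Fin 2) K) * C (N : K) = 1 := by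
    rw [← C_mul, inv_mul_cancel₀ hNK, C_1]
  have hC2 : (C ((M : K) / N) : MvPolynomial (Fin 2) K) = C ((N : K))⁻¹ * C (M : K) := by
    rw [← C_mul, div_eq_inv_mul]
  have hC3 : (C ((M : K) / N) : MvPolynomial (Fin 2) K) * C (N : K) = C (M : K) := by
    rw [← C_mul, div_mul_cancel₀ _ hNK]
  have hφψ : ∀ f, φ (ψ f) = f := by
    have h : φ.comp ψ = AlgHom.id K (MvPolynomial (Fin 2) K) := by
      apply MvPolynomial.algHom_ext
      intro i
      fin_cases i
      · simp [hφ, hψ]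
      · simp only [AlgHom.comp_apply, AlgHom.id_apply, hψ, hφ, aeval_X]
        simp only [Fin.mk_one, if_neg (one_ne_zero (α := Fin 2)), map_sub, map_mul, aeval_X,
          aeval_C, reduceIte, MvPolynomial.algebraMap_eq, hL]
        linear_combination (X 0 : MvPolynomial (Fin 2) K) * hC2 +
          (X 1 : MvPolynomial (Fin 2) K) * hCC
    intro f; exact DFunLike.congr_fun h f
  have hcomm : ∀ f, ψ (shift2 K N M f) = shift2 K N 0 (ψ f) := by
    have h : ψ.comp (shift2 K N M) = (shift2 K N 0).comp ψ := by
      apply MvPolynomial.algHom_ext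
      intro i
      fin_cases i
      · simp [hψ, shift2]
      · simp only [AlgHom.comp_apply, hψ, shift2, aeval_X, map_add, aeval_C, map_sub, map_mul,
          Fin.mk_one, if_neg (one_ne_zero (α := Fin 2)), reduceIte, MvPolynomial.algebraMap_eq,
          Int.cast_zero, C_0, add_zero]
        linear_combination -hC3
    intro f; exact DFunLike.congr_fun h f
  -- the composition hom on Polynomial A
  set cp : Polynomial (MvPolynomial (Fin 1) K) →ₐ[K] Polynomial (MvPolynomial (Fin 1) K) :=
    AlgHom.restrictScalars K (Polynomial.aeval (Polynomial.X + Polynomial.C (C (N : K)))) with hcp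
  have hcpapply : ∀ g : Polynomial (MvPolynomial (Fin 1) K),
      cp g = g.comp (Polynomial.X + Polynomial.C (C (N : K))) := by
    intro g
    simp [hcp, Polynomial.aeval_def, Polynomial.algebraMap_eq, Polynomial.comp]
  have heC : ∀ c : K, e (C c) = Polynomial.C (C c) := by
    intro c
    have h1 : (C c : MvPolynomial (Fin 2) K) = algebraMap K _ c := rfl
    rw [h1, AlgEquiv.commutes]
    rfl
  have hX1 : (X (1 : Fin 2) : MvPolynomial (Fin 2) K) = X (Fin.succ 0) := rfl
  have heX1 : e (X 1) = Polynomial.C (X 0) := by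
    rw [hX1, he]; exact finSuccEquiv_X_succ
  have heX0 : e (X 0) = Polynomial.X := by rw [he]; exact finSuccEquiv_X_zero
  have hE : ∀ f, e (shift2 K N 0 f) = (e f).comp (Polynomial.X + Polynomial.C (C (N : K))) := by
    have h : (e.toAlgHom.comp (shift2 K N 0)) = cp.comp e.toAlgHom := by
      apply MvPolynomial.algHom_ext
      intro i
      fin_cases i
      · simp only [AlgHom.comp_apply, AlgEquiv.toAlgHom_eq_coe, AlgHom.coe_coe, AlgEquiv.coe_toAlgHom, shift2, aeval_X,
          map_add, Fin.zero_eta, reduceIte]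
        rw [hcpapply, heX0, heC, Polynomial.X_comp]
      · simp only [AlgHom.comp_apply, AlgEquiv.toAlgHom_eq_coe, AlgHom.coe_coe, AlgEquiv.coe_toAlgHom, shift2, aeval_X,
          map_add, Fin.mk_one, if_neg (one_ne_zero (α := Fin 2)), Int.cast_zero, C_0, map_zero,
          add_zero]
        rw [hcpapply, heX1, Polynomial.C_comp]
    intro f
    have h2 := DFunLike.congr_fun h f
    simp only [AlgHom.comp_apply, AlgEquiv.toAlgHom_eq_coe, AlgHom.coe_coe, AlgEquiv.coe_toAlgHom] at h2
    rw [h2, hcpapply]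
  set F : Polynomial (MvPolynomial (Fin 1) K) := e (ψ q) with hF
  have hψq : ψ q ≠ 0 := fun h0 => hq0 (by rw [← hφψ q, h0, map_zero])
  have hFne : F ≠ 0 := by
    simp only [hF, ne_eq, EmbeddingLike.map_eq_zero_iff]
    exact hψq
  obtain ⟨u, hu⟩ := hassoc
  set Φ : MvPolynomial (Fin 2) K →ₐ[K] Polynomial (MvPolynomial (Fin 1) K) :=
    e.toAlgHom.comp ψ with hΦ
  have hEq : F.comp (Polynomial.X + Polynomial.C (C (N : K))) * Φ u = F := by
    have h1 : Φ (shift2 K N M q) = F.comp (Polynomial.X + Polynomial.C (C (N : K))) := by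
      simp only [hΦ, AlgHom.comp_apply, AlgEquiv.toAlgHom_eq_coe, AlgHom.coe_coe, AlgEquiv.coe_toAlgHom]
      rw [hcomm, hE]
    calc F.comp (Polynomial.X + Polynomial.C (C (N : K))) * Φ u
        = Φ (shift2 K N M q) * Φ u := by rw [h1]
      _ = Φ (shift2 K N M q * u) := (map_mul Φ _ _).symm
      _ = Φ q := by rw [hu]
      _ = F := rfl
  set U : Polynomial (MvPolynomial (Fin 1) K) := Φ u with hU
  have hUunit : IsUnit U := (Units.isUnit u).map Φ
  have hUdeg : U.natDegree = 0 := Polynomial.natDegree_eq_zero_of_isUnit hUunit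
  have hgdeg : (Polynomial.X + Polynomial.C (C (N : K)) :
      Polynomial (MvPolynomial (Fin 1) K)).natDegree ≠ 0 := by
    rw [Polynomial.natDegree_X_add_C]; exact one_ne_zero
  have hlcomp : (F.comp (Polynomial.X + Polynomial.C (C (N : K)))).leadingCoeff
      = F.leadingCoeff := by
    rw [Polynomial.leadingCoeff_comp hgdeg, Polynomial.leadingCoeff_X_add_C, one_pow, mul_one]
  have hlF : F.leadingCoeff ≠ 0 := Polynomial.leadingCoeff_ne_zero.2 hFne
  have hlU : U.leadingCoeff = 1 := by
    have h3 := congrArg Polynomial.leadingCoeff hEq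
    rw [Polynomial.leadingCoeff_mul, hlcomp] at h3
    have h4 : F.leadingCoeff * U.leadingCoeff = F.leadingCoeff * 1 := by rw [mul_one]; exact h3
    exact mul_left_cancel₀ hlF h4
  have hU1 : U = 1 := by
    have h1 : U = Polynomial.C (U.coeff 0) := Polynomial.eq_C_of_natDegree_eq_zero hUdeg
    have h2 : U.coeff 0 = U.leadingCoeff := by rw [Polynomial.leadingCoeff, hUdeg]
    rw [h1, h2, hlU, Polynomial.C_1]
  have hper : F.comp (Polynomial.X + Polynomial.C (C (N : K))) = F := by
    rw [hU1, mul_one] at hEq; exact hEq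
  -- periodic evaluation
  have hev : ∀ z : MvPolynomial (Fin 1) K, F.eval (z + C (N : K)) = F.eval z := by
    intro z
    conv_rhs => rw [← hper]
    rw [Polynomial.eval_comp]
    simp
  have hk : ∀ k : ℕ, F.eval ((k : MvPolynomial (Fin 1) K) * C (N : K)) = F.eval 0 := by
    intro k
    induction k with
    | zero => simp
    | succ k ih =>
      have h5 : ((k + 1 : ℕ) : MvPolynomial (Fin 1) K) * C (N : K)
          = (k : MvPolynomial (Fin 1) K) * C (N : K) + C (N : K) := by
        push_cast; ring
      rw [h5, hev]; exact ih
  set s : MvPolynomial (Fin 1) K := F.eval 0 with hs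
  have hCN0 : (C (N : K) : MvPolynomial (Fin 1) K) ≠ 0 := by
    intro h0
    have h6 : (N : K) = 0 := by
      have := (C_inj (σ := Fin 1) K ((N : K)) 0).1 (by rw [h0, C_0])
      exact this
    exact hNK h6
  have hGzero : F - Polynomial.C s = 0 := by
    apply Polynomial.eq_zero_of_infinite_isRoot
    apply Set.infinite_of_injective_forall_mem
      (f := fun k : ℕ => (k : MvPolynomial (Fin 1) K) * C (N : K))
    · intro a b hab
      exact Nat.cast_injective (mul_right_cancel₀ hCN0 hab)
    · intro k
      simp only [Set.mem_setOf_eq, Polynomial.IsRoot, Polynomial.eval_sub, Polynomial.eval_C]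
      rw [hk k, hs, sub_self]
  have hFC : F = Polynomial.C s := by rwa [sub_eq_zero] at hGzero
  -- reconstruct q
  have hrec : ∀ t : MvPolynomial (Fin 1) K,
      φ (e.symm (Polynomial.C t)) = aeval (fun _ : Fin 1 => L) t := by
    intro t
    induction t using MvPolynomial.induction_on with
    | C a =>
      have h1 : e.symm (Polynomial.C (C a)) = C a := by
        rw [AlgEquiv.symm_apply_eq, heC]
      rw [h1]
      simp [hφ, aeval_C]
    | add f g hf hg =>
      rw [Polynomial.C_add, map_add, map_add, hf, hg, map_add]
    | mul_X f j hf =>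
      have hj : j = 0 := Subsingleton.elim j 0
      have h1 : e.symm (Polynomial.C (X (0 : Fin 1))) = X 1 := by
        rw [AlgEquiv.symm_apply_eq, heX1]
      rw [hj, Polynomial.C_mul, map_mul, map_mul, hf, h1]
      have h2 : φ (X 1) = L := by
        simp [hφ, if_neg (one_ne_zero (α := Fin 2))]
      rw [h2, map_mul, aeval_X]
  have hqL : q = aeval (fun _ : Fin 1 => L) s := by
    have h1 : ψ q = e.symm (Polynomial.C s) := by
      rw [AlgEquiv.eq_symm_apply]; exact hFC
    calc q = φ (ψ q) := (hφψ q).symm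
      _ = φ (e.symm (Polynomial.C s)) := by rw [h1]
      _ = aeval (fun _ : Fin 1 => L) s := hrec s
  refine ⟨aeval (fun _ : Fin 1 => (Polynomial.X : Polynomial K)) s, M, -N, ?_⟩
  have hLeq : ((M : K) • (X 0 : MvPolynomial (Fin 2) K) + ((-N : ℤ) : K) • X 1) = L := by
    rw [hL, smul_eq_C_mul, smul_eq_C_mul]
    push_cast
    rw [map_neg]
    ring
  rw [hLeq, hqL]
  have hcompose : (Polynomial.aeval L).comp
      (aeval (fun _ : Fin 1 => (Polynomial.X : Polynomial K)) :
        MvPolynomial (Fin 1) K →ₐ[K] Polynomial K) = aeval (fun _ : Fin 1 => L) := by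
    apply MvPolynomial.algHom_ext
    intro j
    simp
  exact (DFunLike.congr_fun hcompose s).symm

end Main

/-- If every irreducible factor `q` of a nonzero `p ∈ K[t,x]` satisfies
`σ_t^n σ_x^m (q) ∣ p` for some `m ∈ ℤ` and `n > 0`, then `p` is integer-linear. -/
theorem integer_linear_of_shift_orbits (K : Type*) [Field K] [CharZero K]
    (p : MvPolynomial (Fin 2) K) (hp : p ≠ 0)
    (H : ∀ q : MvPolynomial (Fin 2) K, Irreducible q → q ∣ p →
      ∃ (m n : ℤ), 0 < n ∧ shift2 K n m q ∣ p) :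
    IsIntegerLinear p := by
  intro q hq hqp
  obtain ⟨N, M, hN, hassoc⟩ := exists_assoc_shift p q hp hq hqp H
  exact eq_aeval_of_assoc q hq.ne_zero N M hN hassoc
end
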